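/- (MacLaurin inequality) For λ ∈ Γ_k and 1 ≤ l ≤ k, one has (σ_k(λ)/C(n,k))^{1/k} ≤ (σ_l(λ)/C(n,l))^{1/l}, where C(n,j) is the binomial coefficient. -/

import Mathlib

open Finset Polynomial

/-- The k-th elementary symmetric polynomial of λ ∈ ℝⁿ. -/
noncomputable def esymm (n k : ℕ) (lam : Fin n → ℝ) : ℝ :=
  ∑ s ∈ Finset.powersetCard k (Finset.univ : Finset (Fin n)), ∏ i ∈ s, lam i

/-- The Garding cone Γ_k. -/
def GammaCone (n k : ℕ) : Set (Fin n → ℝ) :=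
  {lam | ∀ j, 1 ≤ j → j ≤ k → 0 < esymm n j lam}

lemma esymm_eq_multiset (n k : ℕ) (f : Fin n → ℝ) :
    esymm n k f = (Multiset.map f Finset.univ.val).esymm k := by
  rw [esymm, ← Finset.esymm_map_val]

lemma esymm_zero' (n : ℕ) (f : Fin n → ℝ) : esymm n 0 f = 1 := by
  simp [esymm]

lemma esymm_top (n : ℕ) (f : Fin n → ℝ) : esymm n n f = ∏ i, f i := by
  have : Finset.powersetCard n (Finset.univ : Finset (Fin n)) = {Finset.univ} := by
    have h2 := Finset.powersetCard_self (Finset.univ : Finset (Fin n))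
    rwa [Finset.card_univ, Fintype.card_fin] at h2
  rw [esymm, this]
  simp

lemma coeff_prod_X_sub_C (n : ℕ) (f : Fin n → ℝ) (m : ℕ) (h : m ≤ n) :
    (∏ i : Fin n, (X - C (f i))).coeff m = (-1)^(n-m) * esymm n (n-m) f := by
  have hcard : Multiset.card (Multiset.map f Finset.univ.val) = n := by simp
  rw [Finset.prod_eq_multiset_prod]
  have := Multiset.prod_X_sub_C_coeff (Multiset.map f Finset.univ.val) (k := m) (by simp [h])
  simp only [hcard] at this
  rw [show (Multiset.map (fun i => X - C (f i)) Finset.univ.val)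
      = Multiset.map (fun r => X - C r) (Multiset.map f Finset.univ.val) by
    rw [Multiset.map_map]; rfl, this, esymm_eq_multiset]

lemma rpow_of_pow_le {a b : ℝ} {u v : ℕ} (ha : 0 < a) (hb : 0 < b) (hu : 1 ≤ u) (hv : 1 ≤ v)
    (h : a ^ u ≤ b ^ v) : a ^ ((1:ℝ)/v) ≤ b ^ ((1:ℝ)/u) := by
  have hu' : ((u:ℝ)) ≠ 0 := by positivity
  have hv' : ((v:ℝ)) ≠ 0 := by positivity
  have key := Real.rpow_le_rpow (by positivity) h
    (by positivity : (0:ℝ) ≤ 1/((u:ℝ)*(v:ℝ)))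
  rwa [← Real.rpow_natCast a u, ← Real.rpow_natCast b v, ← Real.rpow_mul ha.le,
    ← Real.rpow_mul hb.le,
    show (u:ℝ) * (1/((u:ℝ)*(v:ℝ))) = 1/v by field_simp,
    show (v:ℝ) * (1/((u:ℝ)*(v:ℝ))) = 1/u by field_simp] at key

lemma derivative_finset_prod {ι : Type*} [DecidableEq ι] (s : Finset ι) (f : ι → ℝ[X]) :
    derivative (∏ i ∈ s, f i) = ∑ i ∈ s, (∏ j ∈ s.erase i, f j) * derivative (f i) := by
  rw [Finset.prod_eq_multiset_prod, derivative_prod, Finset.sum_eq_multiset_sum]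
  refine congrArg Multiset.sum (Multiset.map_congr rfl fun i hi => ?_)
  rw [Finset.prod_eq_multiset_prod, Finset.erase_val]

lemma eval_zero_prod_X_sub_C {n : ℕ} (f : Fin n → ℝ) (s : Finset (Fin n)) :
    (∏ k ∈ s, (X - C (f k))).eval 0 = (-1)^s.card * ∏ k ∈ s, f k := by
  rw [eval_prod]
  simp only [eval_sub, eval_X, eval_C, zero_sub]
  calc ∏ x ∈ s, -f x = ∏ x ∈ s, ((-1) * f x) := by simp
  _ = (∏ _x ∈ s, (-1:ℝ)) * ∏ x ∈ s, f x := Finset.prod_mul_distrib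
  _ = (-1)^s.card * ∏ k ∈ s, f k := by rw [Finset.prod_const]

lemma newton_top (n : ℕ) (hn : 2 ≤ n) (f : Fin n → ℝ) :
    2 * n * (esymm n (n-2) f * esymm n n f) ≤ ((n : ℝ) - 1) * (esymm n (n-1) f)^2 := by
  classical
  set q : Fin n → ℝ := fun i => ∏ k ∈ Finset.univ.erase i, f k with hq
  set r : Fin n → Fin n → ℝ := fun i j => ∏ k ∈ (Finset.univ.erase i).erase j, f k with hr
  set P : ℝ[X] := ∏ i : Fin n, (X - C (f i)) with hP
  have hd1 : derivative P = ∑ i : Fin n, ∏ k ∈ Finset.univ.erase i, (X - C (f k)) := by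
    rw [hP, derivative_finset_prod]
    simp
  have hd2 : derivative (derivative P) =
      ∑ i : Fin n, ∑ j ∈ Finset.univ.erase i, ∏ k ∈ (Finset.univ.erase i).erase j, (X - C (f k)) := by
    rw [hd1, derivative_sum]
    refine Finset.sum_congr rfl fun i _ => ?_
    rw [derivative_finset_prod]
    simp
  have hcu : (Finset.univ : Finset (Fin n)).card = n := by simp
  have hce : ∀ i : Fin n, (Finset.univ.erase i).card = n - 1 := fun i => by
    rw [Finset.card_erase_of_mem (Finset.mem_univ i), hcu]
  have hce2 : ∀ i j : Fin n, j ∈ Finset.univ.erase i → ((Finset.univ.erase i).erase j).card = n - 2 := by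
    intro i j hj
    rw [Finset.card_erase_of_mem hj, hce i]
    omega
  have hm1 : (-1 : ℝ)^(n-1) ≠ 0 := by positivity
  have hm2 : (-1 : ℝ)^(n-2) ≠ 0 := by positivity
  -- σ_{n-1} = ∑ q
  have h1 : esymm n (n-1) f = ∑ i : Fin n, q i := by
    have e1 : (derivative P).eval 0 = P.coeff 1 := by
      rw [← coeff_zero_eq_eval_zero, coeff_derivative]; ring
    rw [hd1, eval_finset_sum] at e1
    simp only [eval_zero_prod_X_sub_C, hce] at e1
    rw [← Finset.mul_sum, coeff_prod_X_sub_C n f 1 (by omega)] at e1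
    exact (mul_left_cancel₀ hm1 e1).symm
  -- 2 σ_{n-2} = ∑∑ r
  have h2 : esymm n (n-2) f * 2 = ∑ i : Fin n, ∑ j ∈ Finset.univ.erase i, r i j := by
    have e2 : (derivative (derivative P)).eval 0 = P.coeff 2 * 2 := by
      rw [← coeff_zero_eq_eval_zero, coeff_derivative, coeff_derivative]; ring
    rw [hd2, eval_finset_sum] at e2
    have heval : ∀ i : Fin n, (∑ j ∈ Finset.univ.erase i, ∏ k ∈ (Finset.univ.erase i).erase j, (X - C (f k))).eval 0
        = (-1)^(n-2) * ∑ j ∈ Finset.univ.erase i, r i j := by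
      intro i
      rw [eval_finset_sum, Finset.mul_sum]
      exact Finset.sum_congr rfl fun j hj => by rw [eval_zero_prod_X_sub_C, hce2 i j hj]
    simp only [heval] at e2
    rw [← Finset.mul_sum, coeff_prod_X_sub_C n f 2 (by omega), mul_assoc] at e2
    exact (mul_left_cancel₀ hm2 e2).symm
  -- q i * q j = σ_n * r i j
  have h3 : ∀ i j : Fin n, j ∈ Finset.univ.erase i → q i * q j = esymm n n f * r i j := by
    intro i j hj
    rw [esymm_top]
    have e1 : f j * r i j = q i := Finset.mul_prod_erase _ f hj
    have e2 : f j * q j = ∏ k, f k := Finset.mul_prod_erase _ f (Finset.mem_univ j)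
    calc q i * q j = (f j * r i j) * q j := by rw [e1]
    _ = (f j * q j) * r i j := by ring
    _ = (∏ k, f k) * r i j := by rw [e2]
  -- combine
  have h4 : (∑ i : Fin n, q i)^2 = (∑ i : Fin n, q i ^ 2) + esymm n n f * (∑ i : Fin n, ∑ j ∈ Finset.univ.erase i, r i j) := by
    rw [sq, Finset.sum_mul_sum, Finset.mul_sum, ← Finset.sum_add_distrib]
    refine Finset.sum_congr rfl fun i _ => ?_
    rw [← Finset.add_sum_erase _ _ (Finset.mem_univ i), sq]
    congr 1
    rw [Finset.mul_sum]
    exact Finset.sum_congr rfl fun j hj => h3 i j hj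
  have h5 : (∑ i : Fin n, q i)^2 ≤ n * ∑ i : Fin n, q i ^ 2 := by
    have := sq_sum_le_card_mul_sum_sq (s := (Finset.univ : Finset (Fin n))) (f := q)
    simpa [hcu] using this
  have key : esymm n n f * (esymm n (n-2) f * 2) = (∑ i : Fin n, q i)^2 - ∑ i : Fin n, q i ^ 2 := by
    rw [h2, h4]; ring
  rw [h1]
  nlinarith [key, h5]

lemma multiset_exists_fn (n : ℕ) (s : Multiset ℝ) (h : Multiset.card s = n) :
    ∃ g : Fin n → ℝ, Multiset.map g Finset.univ.val = s := by
  induction s using Quotient.inductionOn with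
  | h l =>
    have hl : l.length = n := by simpa using h
    subst hl
    exact ⟨l.get, by rw [Fin.univ_val_map]; exact congrArg _ (List.ofFn_get l)⟩

lemma newton_multiset : ∀ (n : ℕ) (s : Multiset ℝ), Multiset.card s = n → ∀ j : ℕ, 1 ≤ j → j + 1 ≤ n →
    s.esymm (j-1) / ((n.choose (j-1) : ℝ)) * (s.esymm (j+1) / (n.choose (j+1) : ℝ))
      ≤ (s.esymm j / (n.choose j : ℝ))^2 := by
  intro n
  induction n with
  | zero => intro s _ j _ h; omega
  | succ n ih =>
    intro s hs j hj hjn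
    by_cases hcase : j + 1 = n + 1
    · -- top case
      have hjn' : j = n := by omega
      subst hjn'
      obtain ⟨g, hg⟩ := multiset_exists_fn (j+1) s hs
      have hes : ∀ m, s.esymm m = esymm (j+1) m g := fun m => by
        rw [esymm_eq_multiset, hg]
      have hn2 : 2 ≤ j + 1 := by omega
      have htop := newton_top (j+1) hn2 g
      have h1 : j + 1 - 2 = j - 1 := by omega
      have h2 : j + 1 - 1 = j := by omega
      rw [h1, h2] at htop
      have hcs : (j+1).choose (j+1) = 1 := Nat.choose_self _
      have hcn : (j+1).choose j = j+1 := Nat.choose_succ_self_right j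
      have hc2 : (j+1).choose (j-1) * 2 = (j+1) * j := by
        have e1 : (j+1).choose (j-1) = (j+1).choose 2 := by
          rw [show j - 1 = (j+1) - 2 by omega]
          exact Nat.choose_symm (by omega)
        have e2 := Nat.choose_succ_right_eq (j+1) 1
        norm_num [Nat.choose_one_right] at e2
        rw [e1]
        omega
      rw [hes, hes, hes, hcs, hcn]
      have hCpos : (0:ℝ) < ((j+1).choose (j-1) : ℝ) := by
        exact_mod_cast Nat.choose_pos (by omega)
      rw [Nat.cast_one, div_one, div_pow, div_mul_eq_mul_div,
        div_le_div_iff₀ hCpos (by positivity)]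
      have hc2R : (((j+1).choose (j-1) : ℕ) : ℝ) * 2 = ((j:ℝ)+1) * j := by exact_mod_cast hc2
      push_cast at htop ⊢
      nlinarith [htop, hc2R]
    · -- induction via derivative
      have hjn2 : j + 1 ≤ n := by omega
      set N := n + 1 with hN
      set p : ℝ[X] := (s.map fun r => X - C r).prod with hp
      have hmonic : p.Monic :=
        monic_multiset_prod_of_monic _ _ (fun r _ => monic_X_sub_C r)
      have hdeg : p.natDegree = N := by
        rw [hp, natDegree_multiset_prod_X_sub_C_eq_card, hs]
      have hroots : p.roots = s := roots_multiset_prod_X_sub_C s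
      set t : Multiset ℝ := (derivative p).roots with ht
      have hcard1 : Multiset.card t ≤ n := by
        calc Multiset.card t ≤ (derivative p).natDegree := Polynomial.card_roots' _
        _ ≤ p.natDegree - 1 := natDegree_derivative_le p
        _ = n := by omega
      have hcard2 : N ≤ Multiset.card t + 1 := by
        have := Polynomial.card_roots_le_derivative p
        rwa [hroots, hs] at this
      have hcardt : Multiset.card t = n := by omega
      have hdegq : (derivative p).natDegree = n := by
        have h1 : Multiset.card t ≤ (derivative p).natDegree := Polynomial.card_roots' _
        have h2 : (derivative p).natDegree ≤ p.natDegree - 1 := natDegree_derivative_le p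
        omega
      have hlead : (derivative p).leadingCoeff = (N : ℝ) := by
        rw [leadingCoeff, hdegq, coeff_derivative]
        have : p.coeff (n + 1) = 1 := by
          have := hmonic.coeff_natDegree
          rwa [hdeg] at this
        rw [this, hN]
        norm_num
      -- coefficient comparison
      have hsym : ∀ m, m ≤ n → (N:ℝ) * t.esymm m = ((N - m : ℕ) : ℝ) * s.esymm m := by
        intro m hm
        have hk1 : n - m ≤ (derivative p).natDegree := by omega
        have e1 := Polynomial.coeff_eq_esymm_roots_of_card
          (p := derivative p) (hdegq ▸ hcardt) hk1
        rw [hdegq, hlead] at e1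
        have hmm : n - (n - m) = m := by omega
        rw [hmm] at e1
        have e2 : (derivative p).coeff (n - m) = p.coeff (n - m + 1) * ((n - m : ℕ) + 1 : ℝ) := by
          rw [coeff_derivative]
        have e3 : p.coeff (n - m + 1) = (-1)^m * s.esymm m := by
          have hk2 : n - m + 1 ≤ Multiset.card s := by omega
          have := Multiset.prod_X_sub_C_coeff s hk2
          rw [hs] at this
          rw [hp, this, show n + 1 - (n - m + 1) = m by omega]
        rw [e2, e3] at e1
        have hsgn : ((-1:ℝ)^m) ≠ 0 := by positivity
        apply mul_left_cancel₀ hsgn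
        have hNm : (N - m : ℕ) = n - m + 1 := by omega
        rw [hNm]
        push_cast at e1 ⊢
        linear_combination -e1
      -- normalized equality
      have hnorm : ∀ m, m ≤ n → t.esymm m / (n.choose m : ℝ) = s.esymm m / (N.choose m : ℝ) := by
        intro m hm
        have hnat : (N.choose m) * (N - m) = N * n.choose m := by
          have e1 := Nat.choose_succ_right_eq N m
          have e2 := Nat.add_one_mul_choose_eq n m
          rw [← e1]
          exact e2.symm
        have hnatR : ((N.choose m : ℝ)) * ((N - m : ℕ) : ℝ) = (N : ℝ) * (n.choose m : ℝ) := by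
          exact_mod_cast hnat
        have hc1 : (0:ℝ) < (n.choose m : ℝ) := by exact_mod_cast Nat.choose_pos hm
        have hc2 : (0:ℝ) < (N.choose m : ℝ) := by exact_mod_cast Nat.choose_pos (by omega)
        rw [div_eq_div_iff hc1.ne' hc2.ne']
        have hNne : ((N:ℕ) : ℝ) ≠ 0 := by positivity
        apply mul_left_cancel₀ hNne
        linear_combination ((N.choose m : ℝ)) * hsym m hm + (s.esymm m) * hnatR
      have := ih t hcardt j hj hjn2
      rw [hnorm (j-1) (by omega), hnorm j (by omega), hnorm (j+1) (by omega)] at this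
      exact this

/-- MacLaurin inequality. -/
theorem maclaurin (n k l : ℕ) (hl : 1 ≤ l) (hlk : l ≤ k) (hkn : k ≤ n)
    (lam : Fin n → ℝ) (hlam : lam ∈ GammaCone n k) :
    (esymm n k lam / (n.choose k : ℝ)) ^ ((1 : ℝ) / k) ≤
      (esymm n l lam / (n.choose l : ℝ)) ^ ((1 : ℝ) / l) := by
  classical
  set p : ℕ → ℝ := fun j => esymm n j lam / (n.choose j : ℝ) with hpdef
  have hp0 : p 0 = 1 := by simp [hpdef, esymm_zero']
  have hppos : ∀ j, 1 ≤ j → j ≤ k → 0 < p j := by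
    intro j h1 h2
    have := hlam j h1 h2
    have hc : (0:ℝ) < (n.choose j : ℝ) := by
      exact_mod_cast Nat.choose_pos (le_trans h2 hkn)
    exact div_pos this hc
  have hnewton : ∀ j, 1 ≤ j → j + 1 ≤ n → p (j-1) * p (j+1) ≤ (p j)^2 := by
    intro j h1 h2
    have hcard : Multiset.card (Multiset.map lam Finset.univ.val) = n := by simp
    have := newton_multiset n (Multiset.map lam Finset.univ.val) hcard j h1 h2
    simpa [hpdef, esymm_eq_multiset] using this
  -- p (j+1) ^ j ≤ p j ^ (j+1)
  have hpow : ∀ j, 1 ≤ j → j + 1 ≤ k → p (j+1) ^ j ≤ p j ^ (j+1) := by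
    intro j hjone
    induction j, hjone using Nat.le_induction with
    | base =>
      intro h2
      have := hnewton 1 le_rfl (by omega)
      rw [show (1:ℕ) - 1 = 0 from rfl, hp0, one_mul] at this
      simpa using this
    | succ j hj ih =>
      intro h2
      have ihj := ih (by omega)
      have hpj : 0 < p j := hppos j hj (by omega)
      have hpj1 : 0 < p (j+1) := hppos (j+1) (by omega) (by omega)
      have hpj2 : 0 < p (j+2) := hppos (j+2) (by omega) h2
      have hne := hnewton (j+1) (by omega) (by omega)
      rw [show j + 1 - 1 = j from rfl] at hne
      have h3 : (p j * p (j+2))^(j+1) ≤ ((p (j+1))^2)^(j+1) := by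
        apply pow_le_pow_left₀ (by positivity) hne
      rw [mul_pow, ← pow_mul] at h3
      have h4 : p (j+2)^(j+1) * p (j+1)^j ≤ p (j+2)^(j+1) * p j^(j+1) :=
        mul_le_mul_of_nonneg_left ihj (by positivity)
      have h5 : p (j+2)^(j+1) * p j^(j+1) ≤ p (j+1)^(2*(j+1)) := by
        calc p (j+2)^(j+1) * p j^(j+1) = p j^(j+1) * p (j+2)^(j+1) := by ring
        _ = (p j * p (j+2))^(j+1) := by rw [mul_pow]
        _ ≤ p (j+1)^(2*(j+1)) := by rw [mul_pow]; exact h3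
      have h6 : p (j+1)^(2*(j+1)) = p (j+1)^(j+1+1) * p (j+1)^j := by
        rw [← pow_add]; congr 1; omega
      have h7 : p (j+2)^(j+1) * p (j+1)^j ≤ p (j+1)^(j+1+1) * p (j+1)^j := by
        rw [← h6]; exact le_trans h4 h5
      exact le_of_mul_le_mul_right h7 (by positivity)
  -- chain
  have hchain : ∀ m, l ≤ m → m ≤ k → p m ^ ((1:ℝ)/m) ≤ p l ^ ((1:ℝ)/l) := by
    intro m hlm
    induction m, hlm using Nat.le_induction with
    | base => exact fun _ => le_rfl
    | succ m hm ih =>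
      intro hmk
      have hml : 1 ≤ m := le_trans hl hm
      have step : p (m+1) ^ ((1:ℝ)/(m+1:ℕ)) ≤ p m ^ ((1:ℝ)/m) :=
        rpow_of_pow_le (hppos (m+1) (by omega) hmk) (hppos m hml (by omega))
          hml (by omega) (hpow m hml hmk)
      calc p (m+1) ^ ((1:ℝ)/(m+1:ℕ)) ≤ p m ^ ((1:ℝ)/m) := step
      _ ≤ p l ^ ((1:ℝ)/l) := ih (by omega)
  have := hchain k (le_trans hlk le_rfl) le_rfl
  simpa [hpdef] using this
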